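/- Let p and p' be strictly positive probability vectors on Fin n, let E : Fin n → ℝ be energies, β > 0, and τ the associated Gibbs distribution. Then there exist N ≥ 1, a strictly positive probability vector r on Fin N, and energies ε, ε' : Fin N → ℝ such that, with reservoir state space Fin N ⊕ Fin N, reservoir energies η = Sum.elim ε ε', initial reservoir distribution w = Sum.elim r 0 and final reservoir distribution w' = Sum.elim 0 r, the thermomajorization curves at inverse temperature β of the joint configuration (p ⊗ w) and of (p' ⊗ w') over the joint energies (i, x) ↦ E i + η x coincide; moreover the average extracted work satisfies ∑ x, r x * (ε' x − ε x) = β⁻¹ * (D₁(p‖τ) − D₁(p'‖τ)). -/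

import Mathlib

open Finset

/-- Kullback–Leibler divergence `D₁(p‖q)`. -/
noncomputable def D1 {S : Type*} [Fintype S] (p q : S → ℝ) : ℝ :=
  ∑ x ∈ Finset.univ.filter (fun x => p x ≠ 0), p x * Real.log (p x / q x)

/-- The thermomajorization curves of `(a, F)` and `(b, F)` at inverse temperature `β`
coincide. -/
def CurvesCoincide {Y : Type*} [Fintype Y] (β : ℝ) (F : Y → ℝ) (a b : Y → ℝ) : Prop :=
  ∀ k : ℝ, 0 < k →
    ∑ y ∈ Finset.univ.filter (fun y => a y * Real.exp (β * F y) = k), a y =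
    ∑ y ∈ Finset.univ.filter (fun y => b y * Real.exp (β * F y) = k), b y

/-- D1 against a Gibbs state. -/
lemma D1_gibbs {n : ℕ} (p : Fin n → ℝ) (hp0 : ∀ i, 0 < p i) (hp1 : ∑ i, p i = 1)
    (E : Fin n → ℝ) (β : ℝ) (τ : Fin n → ℝ)
    (hτ : ∀ i, τ i = Real.exp (-β * E i) / ∑ j, Real.exp (-β * E j))
    (hZ : 0 < ∑ j, Real.exp (-β * E j)) :
    D1 p τ = (∑ i, p i * Real.log (p i * Real.exp (β * E i)))
      + Real.log (∑ j, Real.exp (-β * E j)) := by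
  have hfilter : Finset.univ.filter (fun x => p x ≠ 0) = Finset.univ := by
    apply Finset.filter_true_of_mem
    intro i _
    exact ne_of_gt (hp0 i)
  rw [D1, hfilter]
  have hlog : ∀ i, p i * Real.log (p i / τ i)
      = p i * Real.log (p i * Real.exp (β * E i))
        + p i * Real.log (∑ j, Real.exp (-β * E j)) := by
    intro i
    have h1 : p i / τ i = (p i * Real.exp (β * E i)) * (∑ j, Real.exp (-β * E j)) := by
      have hx : Real.exp (-β * E i) = (Real.exp (β * E i))⁻¹ := by
        rw [← Real.exp_neg]; congr 1; ring
      rw [hτ i, hx]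
      field_simp
    rw [h1, Real.log_mul (ne_of_gt (mul_pos (hp0 i) (Real.exp_pos _))) (ne_of_gt hZ), mul_add]
  rw [Finset.sum_congr rfl (fun i _ => hlog i), Finset.sum_add_distrib, ← Finset.sum_mul, hp1,
    one_mul]

theorem efficient_work_reservoir_exists
    {n : ℕ} (p p' : Fin n → ℝ)
    (hp0 : ∀ i, 0 < p i) (hp1 : ∑ i, p i = 1)
    (hp'0 : ∀ i, 0 < p' i) (hp'1 : ∑ i, p' i = 1)
    (E : Fin n → ℝ) (β : ℝ) (hβ : 0 < β)
    (τ : Fin n → ℝ)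
    (hτ : ∀ i, τ i = Real.exp (-β * E i) / ∑ j, Real.exp (-β * E j)) :
    ∃ (N : ℕ) (_ : 1 ≤ N) (r : Fin N → ℝ) (ε ε' : Fin N → ℝ),
      (∀ j, 0 < r j) ∧ (∑ j, r j = 1) ∧
      CurvesCoincide β
        (fun y : Fin n × (Fin N ⊕ Fin N) => E y.1 + Sum.elim ε ε' y.2)
        (fun y : Fin n × (Fin N ⊕ Fin N) => p y.1 * Sum.elim r (0 : Fin N → ℝ) y.2)
        (fun y : Fin n × (Fin N ⊕ Fin N) => p' y.1 * Sum.elim (0 : Fin N → ℝ) r y.2) ∧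
      ∑ x, r x * (ε' x - ε x) = β⁻¹ * (D1 p τ - D1 p' τ) := by
  classical
  have hn : 0 < n := by
    rcases Nat.eq_zero_or_pos n with h | h
    · subst h; simp at hp1
    · exact h
  have hβ0 : β ≠ 0 := ne_of_gt hβ
  set A : Fin n → ℝ := fun i => p i * Real.exp (β * E i) with hA
  set A' : Fin n → ℝ := fun i => p' i * Real.exp (β * E i) with hA'
  have hApos : ∀ i, 0 < A i := fun i => mul_pos (hp0 i) (Real.exp_pos _)
  have hA'pos : ∀ i, 0 < A' i := fun i => mul_pos (hp'0 i) (Real.exp_pos _)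
  set d : Fin (n * n) → Fin n × Fin n := fun x => finProdFinEquiv.symm x with hd
  set r : Fin (n * n) → ℝ := fun x => p' (d x).1 * p (d x).2 with hr
  have hrpos : ∀ x, 0 < r x := fun x => mul_pos (hp'0 _) (hp0 _)
  set ε : Fin (n * n) → ℝ := fun x => β⁻¹ * Real.log (A' (d x).1 / r x) with hε
  set ε' : Fin (n * n) → ℝ := fun x => β⁻¹ * Real.log (A (d x).2 / r x) with hε'
  have key1 : ∀ x, r x * Real.exp (β * ε x) = A' (d x).1 := by
    intro x
    have h1 : β * ε x = Real.log (A' (d x).1 / r x) := by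
      simp only [hε]; field_simp
    rw [h1, Real.exp_log (div_pos (hA'pos _) (hrpos x)), mul_comm,
      div_mul_cancel₀ _ (ne_of_gt (hrpos x))]
  have key2 : ∀ x, r x * Real.exp (β * ε' x) = A (d x).2 := by
    intro x
    have h1 : β * ε' x = Real.log (A (d x).2 / r x) := by
      simp only [hε']; field_simp
    rw [h1, Real.exp_log (div_pos (hApos _) (hrpos x)), mul_comm,
      div_mul_cancel₀ _ (ne_of_gt (hrpos x))]
  refine ⟨n * n, Nat.one_le_iff_ne_zero.mpr (by positivity), r, ε, ε', hrpos, ?_, ?_, ?_⟩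
  · -- sum r = 1
    have he := Equiv.sum_comp finProdFinEquiv.symm
      (fun y : Fin n × Fin n => p' y.1 * p y.2)
    calc ∑ j, r j = ∑ y : Fin n × Fin n, p' y.1 * p y.2 := he
      _ = 1 := by
        rw [Fintype.sum_prod_type]
        simp only [← Finset.mul_sum, hp1, mul_one, hp'1]
  · -- curves coincide
    intro k hk
    rw [Finset.sum_filter, Finset.sum_filter, Fintype.sum_prod_type, Fintype.sum_prod_type]
    have hL : ∀ i : Fin n,
        (∑ x : Fin (n*n) ⊕ Fin (n*n), if p i * Sum.elim r (0 : Fin (n*n) → ℝ) x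
            * Real.exp (β * (E i + Sum.elim ε ε' x)) = k
          then p i * Sum.elim r (0 : Fin (n*n) → ℝ) x else 0)
        = ∑ a : Fin n, if A i * A' a = k then p i * p' a else 0 := by
      intro i
      rw [Fintype.sum_sum_type]
      have h2 : (∑ j : Fin (n*n), if p i * Sum.elim r (0 : Fin (n*n) → ℝ) (Sum.inr j)
            * Real.exp (β * (E i + Sum.elim ε ε' (Sum.inr j))) = k
          then p i * Sum.elim r (0 : Fin (n*n) → ℝ) (Sum.inr j) else 0) = 0 := by
        apply Finset.sum_eq_zero
        intro j _
        simp [ne_of_gt hk]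
      have hval : ∀ j : Fin (n*n), p i * r j * Real.exp (β * (E i + ε j))
          = A i * A' (d j).1 := by
        intro j
        rw [mul_add, Real.exp_add, ← key1 j]
        simp only [hA]
        ring
      have h1 : (∑ j : Fin (n*n), if p i * Sum.elim r (0 : Fin (n*n) → ℝ) (Sum.inl j)
            * Real.exp (β * (E i + Sum.elim ε ε' (Sum.inl j))) = k
          then p i * Sum.elim r (0 : Fin (n*n) → ℝ) (Sum.inl j) else 0)
          = ∑ a : Fin n, if A i * A' a = k then p i * p' a else 0 := by
        calc (∑ j : Fin (n*n), if p i * Sum.elim r (0 : Fin (n*n) → ℝ) (Sum.inl j)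
              * Real.exp (β * (E i + Sum.elim ε ε' (Sum.inl j))) = k
            then p i * Sum.elim r (0 : Fin (n*n) → ℝ) (Sum.inl j) else 0)
            = ∑ j : Fin (n*n), if A i * A' (d j).1 = k then p i * r j else 0 := by
              apply Finset.sum_congr rfl
              intro j _
              simp only [Sum.elim_inl]
              simp only [hval j]
          _ = ∑ y : Fin n × Fin n, if A i * A' y.1 = k then p i * (p' y.1 * p y.2) else 0 :=
              Equiv.sum_comp finProdFinEquiv.symm
                (fun y : Fin n × Fin n => if A i * A' y.1 = k then p i * (p' y.1 * p y.2) else 0)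
          _ = ∑ a : Fin n, if A i * A' a = k then p i * p' a else 0 := by
              rw [Fintype.sum_prod_type]
              apply Finset.sum_congr rfl
              intro a _
              by_cases hc : A i * A' a = k
              · simp only [hc, if_true, ← Finset.mul_sum, hp1, mul_one]
              · simp [hc]
      rw [h1, h2, add_zero]
    have hR : ∀ i : Fin n,
        (∑ x : Fin (n*n) ⊕ Fin (n*n), if p' i * Sum.elim (0 : Fin (n*n) → ℝ) r x
            * Real.exp (β * (E i + Sum.elim ε ε' x)) = k
          then p' i * Sum.elim (0 : Fin (n*n) → ℝ) r x else 0)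
        = ∑ b : Fin n, if A' i * A b = k then p' i * p b else 0 := by
      intro i
      rw [Fintype.sum_sum_type]
      have h2 : (∑ j : Fin (n*n), if p' i * Sum.elim (0 : Fin (n*n) → ℝ) r (Sum.inl j)
            * Real.exp (β * (E i + Sum.elim ε ε' (Sum.inl j))) = k
          then p' i * Sum.elim (0 : Fin (n*n) → ℝ) r (Sum.inl j) else 0) = 0 := by
        apply Finset.sum_eq_zero
        intro j _
        simp [ne_of_gt hk]
      have hval : ∀ j : Fin (n*n), p' i * r j * Real.exp (β * (E i + ε' j))
          = A' i * A (d j).2 := by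
        intro j
        rw [mul_add, Real.exp_add, ← key2 j]
        simp only [hA']
        ring
      have h1 : (∑ j : Fin (n*n), if p' i * Sum.elim (0 : Fin (n*n) → ℝ) r (Sum.inr j)
            * Real.exp (β * (E i + Sum.elim ε ε' (Sum.inr j))) = k
          then p' i * Sum.elim (0 : Fin (n*n) → ℝ) r (Sum.inr j) else 0)
          = ∑ b : Fin n, if A' i * A b = k then p' i * p b else 0 := by
        calc (∑ j : Fin (n*n), if p' i * Sum.elim (0 : Fin (n*n) → ℝ) r (Sum.inr j)
              * Real.exp (β * (E i + Sum.elim ε ε' (Sum.inr j))) = k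
            then p' i * Sum.elim (0 : Fin (n*n) → ℝ) r (Sum.inr j) else 0)
            = ∑ j : Fin (n*n), if A' i * A (d j).2 = k then p' i * r j else 0 := by
              apply Finset.sum_congr rfl
              intro j _
              simp only [Sum.elim_inr]
              simp only [hval j]
          _ = ∑ y : Fin n × Fin n, if A' i * A y.2 = k then p' i * (p' y.1 * p y.2) else 0 :=
              Equiv.sum_comp finProdFinEquiv.symm
                (fun y : Fin n × Fin n => if A' i * A y.2 = k then p' i * (p' y.1 * p y.2) else 0)
          _ = ∑ b : Fin n, if A' i * A b = k then p' i * p b else 0 := by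
              rw [Fintype.sum_prod_type_right]
              apply Finset.sum_congr rfl
              intro b _
              by_cases hc : A' i * A b = k
              · simp only [hc, if_true, ← Finset.mul_sum]
                rw [← Finset.sum_mul, hp'1, one_mul]
              · simp [hc]
      rw [h1, h2, zero_add]
    rw [Finset.sum_congr rfl (fun i _ => hL i), Finset.sum_congr rfl (fun i _ => hR i)]
    rw [Finset.sum_comm]
    apply Finset.sum_congr rfl
    intro a _
    apply Finset.sum_congr rfl
    intro i _
    rw [mul_comm (A i) (A' a), mul_comm (p i) (p' a)]
  · -- work
    have hsum : ∑ x, r x * (ε' x - ε x)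
        = ∑ y : Fin n × Fin n, (p' y.1 * p y.2)
            * (β⁻¹ * (Real.log (A y.2) - Real.log (A' y.1))) := by
      rw [← Equiv.sum_comp finProdFinEquiv.symm
        (fun y : Fin n × Fin n => (p' y.1 * p y.2)
            * (β⁻¹ * (Real.log (A y.2) - Real.log (A' y.1))))]
      apply Finset.sum_congr rfl
      intro x _
      have h1 : ε' x - ε x = β⁻¹ * (Real.log (A (d x).2) - Real.log (A' (d x).1)) := by
        simp only [hε', hε]
        rw [Real.log_div (ne_of_gt (hApos _)) (ne_of_gt (hrpos x)),
          Real.log_div (ne_of_gt (hA'pos _)) (ne_of_gt (hrpos x))]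
        ring
      rw [h1]
    rw [hsum]
    have hterm : ∀ (a b : Fin n), (p' a * p b) * (β⁻¹ * (Real.log (A b) - Real.log (A' a)))
        = β⁻¹ * (p' a * (p b * Real.log (A b))) - β⁻¹ * (p b * (p' a * Real.log (A' a))) := by
      intro a b; ring
    have hsplit : ∑ y : Fin n × Fin n, (p' y.1 * p y.2)
            * (β⁻¹ * (Real.log (A y.2) - Real.log (A' y.1)))
        = β⁻¹ * ((∑ b, p b * Real.log (A b)) - (∑ a, p' a * Real.log (A' a))) := by
      calc ∑ y : Fin n × Fin n, (p' y.1 * p y.2)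
              * (β⁻¹ * (Real.log (A y.2) - Real.log (A' y.1)))
          = ∑ a, ∑ b, (β⁻¹ * (p' a * (p b * Real.log (A b)))
              - β⁻¹ * (p b * (p' a * Real.log (A' a)))) := by
            rw [Fintype.sum_prod_type]
            exact Finset.sum_congr rfl fun a _ => Finset.sum_congr rfl fun b _ => hterm a b
        _ = ∑ a, (β⁻¹ * (p' a * ∑ b, p b * Real.log (A b))
              - β⁻¹ * (p' a * Real.log (A' a))) := by
            apply Finset.sum_congr rfl
            intro a _
            rw [Finset.sum_sub_distrib, ← Finset.mul_sum, ← Finset.mul_sum, ← Finset.mul_sum,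
              ← Finset.sum_mul, hp1, one_mul]
        _ = β⁻¹ * ((∑ b, p b * Real.log (A b)) - (∑ a, p' a * Real.log (A' a))) := by
            rw [Finset.sum_sub_distrib, ← Finset.mul_sum, ← Finset.mul_sum,
              ← Finset.sum_mul, hp'1, one_mul, ← mul_sub]
    rw [hsplit]
    have hZpos : 0 < ∑ j, Real.exp (-β * E j) := by
      have : Nonempty (Fin n) := Fin.pos_iff_nonempty.mp hn
      exact Finset.sum_pos (fun j _ => Real.exp_pos _) Finset.univ_nonempty
    rw [D1_gibbs p hp0 hp1 E β τ hτ hZpos, D1_gibbs p' hp'0 hp'1 E β τ hτ hZpos]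
    simp only [hA, hA']
    ring
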